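/- Bayesian inversions compose: let σ be a subdistribution on X, let c be a subdistribution kernel from X to Y and d a subdistribution kernel from Y to Z. Write σ;c for the subdistribution on Y given by (σ;c) y = ∑' x, σ x * c x y, and c;d for the composite kernel (c;d) x z = ∑' y, c x y * d y z. Then for all z : Z and x : X, (c;d)†σ z x = ∑' y, d†(σ;c) z y * c†σ y x. -/

import Mathlib

open scoped ENNReal

/-- The Bayesian inversion of a subdistribution kernel `g : X → Y` with
respect to a subdistribution `σ` on `X`. -/
noncomputable def bayesInv {X Y : Type*} (σ : X → ℝ≥0∞) (g : X → Y → ℝ≥0∞)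
    (y : Y) (x : X) : ℝ≥0∞ :=
  (σ x * g x y) / ∑' x', σ x' * g x' y

/-- Bayesian inversions compose: the inversion of `c ; d` with respect to `σ`
is the inversion of `d` with respect to `σ ; c`, followed by the inversion of
`c` with respect to `σ`. -/
theorem bayesInv_comp
    {X Y Z : Type*} (σ : X → ℝ≥0∞) (hσ : ∑' x, σ x ≤ 1)
    (c : X → Y → ℝ≥0∞) (hc : ∀ x, ∑' y, c x y ≤ 1)
    (d : Y → Z → ℝ≥0∞) (hd : ∀ y, ∑' z, d y z ≤ 1) :
    ∀ (z : Z) (x : X),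
      bayesInv σ (fun x z => ∑' y, c x y * d y z) z x
        = ∑' y, bayesInv (fun y => ∑' x', σ x' * c x' y) d z y * bayesInv σ c y x := by
  intro z x
  set A : Y → ℝ≥0∞ := fun y => ∑' x', σ x' * c x' y with hA
  set N : ℝ≥0∞ := ∑' x', σ x' * ∑' y, c x' y * d y z with hNdef
  have hN : N = ∑' y, A y * d y z := by
    calc N = ∑' x', ∑' y, σ x' * (c x' y * d y z) := by
            simp [hNdef, ENNReal.tsum_mul_left]
      _ = ∑' y, ∑' x', σ x' * (c x' y * d y z) := ENNReal.tsum_comm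
      _ = ∑' y, ∑' x', (σ x' * c x' y) * d y z := by
            congr 1; ext y; congr 1; ext x'; ring
      _ = ∑' y, A y * d y z := by
            simp [hA, ENNReal.tsum_mul_right]
  have hAfin : ∀ y, A y ≠ ∞ := by
    intro y
    have : A y ≤ 1 := by
      refine le_trans (ENNReal.tsum_le_tsum fun x' => ?_) hσ
      have hcle : c x' y ≤ 1 := le_trans (ENNReal.le_tsum y) (hc x')
      calc σ x' * c x' y ≤ σ x' * 1 := mul_le_mul_right hcle _
        _ = σ x' := mul_one _
    exact ne_top_of_le_ne_top ENNReal.one_ne_top this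
  have key : ∀ y, (A y * d y z / N) * (σ x * c x y / A y)
      = (σ x * c x y * d y z) / N := by
    intro y
    by_cases h0 : A y = 0
    · have hle : σ x * c x y ≤ A y := ENNReal.le_tsum x
      have : σ x * c x y = 0 := le_antisymm (h0 ▸ hle) zero_le
      simp [h0, this]
    · rw [div_eq_mul_inv, div_eq_mul_inv, div_eq_mul_inv]
      calc (A y * d y z * N⁻¹) * (σ x * c x y * (A y)⁻¹)
          = (A y * (A y)⁻¹) * (σ x * c x y * d y z * N⁻¹) := by ring
        _ = σ x * c x y * d y z * N⁻¹ := by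
            rw [ENNReal.mul_inv_cancel h0 (hAfin y), one_mul]
  show (σ x * ∑' y, c x y * d y z) / N
      = ∑' y, (A y * d y z / (∑' y', A y' * d y' z)) * (σ x * c x y / A y)
  rw [← hN]
  calc (σ x * ∑' y, c x y * d y z) / N
      = (∑' y, σ x * (c x y * d y z)) / N := by rw [ENNReal.tsum_mul_left]
    _ = ∑' y, (σ x * c x y * d y z) / N := by
        rw [div_eq_mul_inv, ← ENNReal.tsum_mul_right]
        exact tsum_congr fun y => by rw [div_eq_mul_inv]; ring
    _ = ∑' y, (A y * d y z / N) * (σ x * c x y / A y) := by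
        congr 1; ext y; rw [key y]
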